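/- Let P be a finite Γ-colored d-complete poset (satisfying EC, NA, AC, ICE2, UCB1), let I be an order ideal of P with maximal element x, and suppose some color c ≠ κ(x) is adjacent to κ(x) in Γ, colors c and κ(x) appear on neighbors in I, and the filter P \ I has no minimal element of color c. Then there exists an element u of color c with u covered by x in P (u → x). -/

import Mathlib

open scoped Classical

private lemma finsetExistsMaximal {α : Type} [Preorder α] (s : Finset α) (h : s.Nonempty) :
    ∃ m ∈ s, ∀ x ∈ s, ¬ m < x := by
  obtain ⟨m, hm⟩ := s.exists_maximal h
  exact ⟨m, hm.1, fun x hx hlt => hlt.not_ge (hm.2 hx hlt.le)⟩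

private lemma finsetExistsMinimal {α : Type} [Preorder α] (s : Finset α) (h : s.Nonempty) :
    ∃ m ∈ s, ∀ x ∈ s, ¬ x < m := by
  obtain ⟨m, hm⟩ := s.exists_minimal h
  exact ⟨m, hm.1, fun x hx hlt => hlt.not_ge (hm.2 hx hlt.le)⟩

/-- In a finite poset, if `w < x` then some cover of `w` lies below `x`. -/
private lemma covAbove {P : Type} [Fintype P] [PartialOrder P] {w x : P} (h : w < x) :
    ∃ z : P, w ⋖ z ∧ z ≤ x := by
  classical
  obtain ⟨z, hz, hzmin⟩ := finsetExistsMinimal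
    (Finset.univ.filter fun s => w < s ∧ s ≤ x) ⟨x, by simp [h]⟩
  simp only [Finset.mem_filter, Finset.mem_univ, true_and] at hz hzmin
  refine ⟨z, ⟨hz.1, fun u hu huz => hzmin u ⟨hu, huz.le.trans hz.2⟩ huz⟩, hz.2⟩

/-- In a finite poset, if `z < w'` then some element above `z` is covered by `w'`. -/
private lemma covBelow {P : Type} [Fintype P] [PartialOrder P] {z w' : P} (h : z < w') :
    ∃ t : P, z ≤ t ∧ t ⋖ w' := by
  classical
  obtain ⟨t, ht, htmax⟩ := finsetExistsMaximal
    (Finset.univ.filter fun s => z ≤ s ∧ s < w') ⟨z, by simp [h]⟩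
  simp only [Finset.mem_filter, Finset.mem_univ, true_and] at ht htmax
  refine ⟨t, ht.1, ⟨ht.2, fun u hu huw => htmax u ⟨ht.1.trans hu.le, huw⟩ hu⟩⟩

/-- Structural claim from the proof of Theorem 6.1: in a finite `Γ`-colored
`d`-complete poset (satisfying EC, NA, AC, ICE2, UCB1), if `I` is an order ideal with
maximal element `x`, `c` is a color distinct from and adjacent to `κ x`, the colors
`c` and `κ x` occur on a pair of neighbors in `I`, and the filter `P \ I` has no
minimal element of color `c`, then some element of color `c` is covered by `x`. -/
theorem stmt18 (P Γ : Type) [Fintype P] [PartialOrder P] [DecidableEq P] [Nonempty P]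
    (G : SimpleGraph Γ) (κ : P → Γ) (hsurj : Function.Surjective κ)
    (hEC : ∀ x y : P, κ x = κ y → x ≤ y ∨ y ≤ x)
    (hNA : ∀ x y : P, x ⋖ y → G.Adj (κ x) (κ y))
    (hAC : ∀ x y : P, G.Adj (κ x) (κ y) → x ≤ y ∨ y ≤ x)
    (hICE2 : ∀ x y : P, κ x = κ y → x < y →
      (∀ z : P, κ z = κ x → ¬ (x < z ∧ z < y)) →
      (Finset.univ.filter (fun z : P => x < z ∧ z < y ∧ G.Adj (κ z) (κ x))).card = 2)
    (hUCB1 : ∀ x : P, (∀ y : P, κ y = κ x → ¬ x < y) →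
      (Finset.univ.filter (fun y : P => x < y ∧ G.Adj (κ y) (κ x))).card ≤ 1)
    (I : Finset P) (hI : IsLowerSet (↑I : Set P))
    (x : P) (hxI : x ∈ I) (hxmax : ∀ y ∈ I, ¬ x < y)
    (c : Γ) (hcx : c ≠ κ x) (hadj : G.Adj c (κ x))
    (hnbr : ∃ u v : P, u ∈ I ∧ v ∈ I ∧ u ⋖ v ∧
      ((κ u = c ∧ κ v = κ x) ∨ (κ u = κ x ∧ κ v = c)))
    (hmin : ¬ ∃ y : P, y ∉ I ∧ κ y = c ∧ ∀ z : P, z ∉ I → z ≤ y → z = y) :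
    ∃ u : P, κ u = c ∧ u ⋖ x := by
  classical
  -- A color-c element of I exists
  obtain ⟨u0, v0, hu0, hv0, _, hcase⟩ := hnbr
  have hSne : (I.filter fun p => κ p = c).Nonempty := by
    rcases hcase with ⟨h1, _⟩ | ⟨_, h2⟩
    · exact ⟨u0, Finset.mem_filter.mpr ⟨hu0, h1⟩⟩
    · exact ⟨v0, Finset.mem_filter.mpr ⟨hv0, h2⟩⟩
  -- w : maximal color-c element of I
  obtain ⟨w, hwmem, hwmax⟩ := finsetExistsMaximal _ hSne
  rw [Finset.mem_filter] at hwmem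
  obtain ⟨hwI, hwc⟩ := hwmem
  -- w < x
  have hwx : w < x := by
    have hne : w ≠ x := fun h => hcx ((h ▸ hwc).symm)
    rcases hAC w x (by rw [hwc]; exact hadj) with h | h
    · exact h.lt_of_ne hne
    · exact absurd (h.lt_of_ne (Ne.symm hne)) (hxmax w hwI)
  refine ⟨w, hwc, ?_⟩
  by_cases hA : ∀ y : P, κ y = κ w → ¬ w < y
  · -- Case A: w is globally maximal of its color; use UCB1
    have hcard := hUCB1 w hA
    obtain ⟨z, hwz, hzx⟩ := covAbove hwx
    have hzset : z ∈ Finset.univ.filter (fun y : P => w < y ∧ G.Adj (κ y) (κ w)) := by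
      simp only [Finset.mem_filter, Finset.mem_univ, true_and]
      exact ⟨hwz.lt, (hNA w z hwz).symm⟩
    have hxset : x ∈ Finset.univ.filter (fun y : P => w < y ∧ G.Adj (κ y) (κ w)) := by
      simp only [Finset.mem_filter, Finset.mem_univ, true_and]
      refine ⟨hwx, ?_⟩
      rw [hwc]; exact hadj.symm
    have hzx' : z = x := by
      by_contra hne
      have h2 : 1 < (Finset.univ.filter (fun y : P => w < y ∧ G.Adj (κ y) (κ w))).card :=
        Finset.one_lt_card.mpr ⟨z, hzset, x, hxset, hne⟩
      omega
    exact hzx' ▸ hwz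
  · -- Case B: there is a color-c element above w; take w' minimal such
    push_neg at hA
    obtain ⟨y0, hy0c, hwy0⟩ := hA
    obtain ⟨w', hw'mem, hw'min⟩ := finsetExistsMinimal
      (Finset.univ.filter fun y : P => κ y = κ w ∧ w < y) ⟨y0, by simp [hy0c, hwy0]⟩
    simp only [Finset.mem_filter, Finset.mem_univ, true_and] at hw'mem hw'min
    obtain ⟨hw'c, hww'⟩ := hw'mem
    -- w' ∉ I
    have hw'I : w' ∉ I := fun h =>
      hwmax w' (Finset.mem_filter.mpr ⟨h, hw'c.trans hwc⟩) hww'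
    -- x < w'
    have hxw' : x < w' := by
      have hne : x ≠ w' := fun h => hw'I (h ▸ hxI)
      rcases hAC x w' (by rw [hw'c, hwc]; exact hadj.symm) with h | h
      · exact h.lt_of_ne hne
      · exact absurd (hI h hxI) hw'I
    -- ICE2 applies to the pair (w, w')
    have hcons : ∀ z : P, κ z = κ w → ¬ (w < z ∧ z < w') := by
      rintro z hz ⟨h1, h2⟩
      exact hw'min z ⟨hz, h1⟩ h2
    have hcard := hICE2 w w' hw'c.symm hww' hcons
    set S2 := Finset.univ.filter (fun z : P => w < z ∧ z < w' ∧ G.Adj (κ z) (κ w)) with hS2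
    -- w' is not minimal in P \ I: get z ∉ I, z < w'
    push_neg at hmin
    obtain ⟨z, hzI, hzw', hzne⟩ := hmin w' hw'I (hw'c.trans hwc)
    have hzlt : z < w' := hzw'.lt_of_ne hzne
    obtain ⟨t, hzt, htw'⟩ := covBelow hzlt
    have htI : t ∉ I := fun h => hzI (hI hzt h)
    have htadj : G.Adj (κ t) (κ w) := by
      have h := hNA t w' htw'
      rwa [hw'c] at h
    have hwt : w < t := by
      have hne : w ≠ t := fun h => htI (h ▸ hwI)
      rcases hAC w t htadj.symm with h | h
      · exact h.lt_of_ne hne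
      · exact absurd (hI h hwI) htI
    have hxS2 : x ∈ S2 := by
      simp only [hS2, Finset.mem_filter, Finset.mem_univ, true_and]
      refine ⟨hwx, hxw', ?_⟩
      rw [hwc]; exact hadj.symm
    have htS2 : t ∈ S2 := by
      simp only [hS2, Finset.mem_filter, Finset.mem_univ, true_and]
      exact ⟨hwt, htw'.lt, htadj⟩
    have hxt : x ≠ t := fun h => htI (h ▸ hxI)
    -- s : a cover of w below x
    obtain ⟨s, hws, hsx⟩ := covAbove hwx
    have hsI : s ∈ I := hI hsx hxI
    have hsadj : G.Adj (κ s) (κ w) := (hNA w s hws).symm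
    have hsw' : s < w' := by
      have hne : s ≠ w' := fun h => hw'I (h ▸ hsI)
      have hadj' : G.Adj (κ s) (κ w') := by rw [hw'c]; exact hsadj
      rcases hAC s w' hadj' with h | h
      · exact h.lt_of_ne hne
      · exact absurd (hI h hsI) hw'I
    have hsS2 : s ∈ S2 := by
      simp only [hS2, Finset.mem_filter, Finset.mem_univ, true_and]
      exact ⟨hws.lt, hsw', hsadj⟩
    -- S2 = {x, t}
    have hsub : ({x, t} : Finset P) ⊆ S2 := by
      intro a ha
      rcases Finset.mem_insert.mp ha with rfl | ha
      · exact hxS2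
      · rw [Finset.mem_singleton] at ha; exact ha ▸ htS2
    have hEq : ({x, t} : Finset P) = S2 :=
      Finset.eq_of_subset_of_card_le hsub (by rw [hcard, Finset.card_pair hxt])
    have : s ∈ ({x, t} : Finset P) := hEq ▸ hsS2
    rcases Finset.mem_insert.mp this with rfl | hst
    · exact hws
    · rw [Finset.mem_singleton] at hst
      exact absurd (hst ▸ hsI) htI
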